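/- For all parameters A, B, C ∈ ℂ with C ≠ 0 and (C;q)_n ≠ 0 for all n, and all x, y ∈ ℂ with |x| < 1 and |y| < 1, the bibasic Humbert function satisfies (1/C)(1−A)·Φ₁(qA,B;qC;q,q₁;x,y) = (1−A/C)·Φ₁(A,B;qC;q,q₁;qx,qy) + (1/C)(1−C)·Φ₁(A,B;C;q,q₁;x,y). (Equation (2.9), with A = q^a, C = q^c, so q^{−c} = 1/C and q^{a−c} = A/C.) -/

import Mathlib

open Complex

/-- The q-shifted factorial (z;q)_n = prod_{r=0}^{n-1} (1 - z q^r). -/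
noncomputable def qPoch (q z : ℂ) (n : ℕ) : ℂ :=
  ∏ r ∈ Finset.range n, (1 - z * q ^ r)

/-- The bibasic Humbert hypergeometric function Φ₁ on two independent bases q and q₁. -/
noncomputable def Phi1 (q q1 A B C x y : ℂ) : ℂ :=
  ∑' p : ℕ × ℕ,
    qPoch q A (p.1 + p.2) * qPoch q1 B p.1 /
      (qPoch q C (p.1 + p.2) * qPoch q1 q1 p.1 * qPoch q q p.2) * x ^ p.1 * y ^ p.2

/-- The Jackson p-derivative. -/
noncomputable def jackson (p : ℂ) (f : ℂ → ℂ) (x : ℂ) : ℂ :=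
  (f x - f (p * x)) / ((1 - p) * x)

lemma qPoch_succ (q z : ℂ) (n : ℕ) : qPoch q z (n+1) = qPoch q z n * (1 - z * q ^ n) :=
  Finset.prod_range_succ _ _

lemma qPoch_shift (q z : ℂ) (n : ℕ) : qPoch q z (n+1) = qPoch q (q*z) n * (1 - z) := by
  rw [qPoch, Finset.prod_range_succ']
  simp only [pow_zero, mul_one, qPoch]
  congr 1
  apply Finset.prod_congr rfl
  intro r _
  rw [pow_succ]
  ring

-- ∏ (1 - t i) ≥ 1 - ∑ t i for 0 ≤ t i ≤ 1
lemma one_sub_sum_le_prod {ι : Type*} (s : Finset ι) (t : ι → ℝ)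
    (h0 : ∀ i ∈ s, 0 ≤ t i) (h1 : ∀ i ∈ s, t i ≤ 1) :
    1 - ∑ i ∈ s, t i ≤ ∏ i ∈ s, (1 - t i) := by
  classical
  induction s using Finset.induction_on with
  | empty => simp
  | insert a s hni ih =>
    rw [Finset.sum_insert hni, Finset.prod_insert hni]
    have h0a := h0 a (Finset.mem_insert_self a s)
    have h1a := h1 a (Finset.mem_insert_self a s)
    have ih' := ih (fun i hi => h0 i (Finset.mem_insert_of_mem hi))
      (fun i hi => h1 i (Finset.mem_insert_of_mem hi))
    have hsum : (0:ℝ) ≤ ∑ i ∈ s, t i := Finset.sum_nonneg fun i hi => h0 i (Finset.mem_insert_of_mem hi)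
    nlinarith [ih']

lemma qPoch_norm_le (q z : ℂ) (hq : ‖q‖ < 1) (n : ℕ) :
    ‖qPoch q z n‖ ≤ Real.exp (‖z‖ / (1 - ‖q‖)) := by
  have hq0 : (0:ℝ) ≤ ‖q‖ := norm_nonneg q
  rw [qPoch, norm_prod]
  calc ∏ r ∈ Finset.range n, ‖1 - z * q ^ r‖
      ≤ ∏ r ∈ Finset.range n, Real.exp (‖z‖ * ‖q‖ ^ r) := by
        apply Finset.prod_le_prod (fun i _ => norm_nonneg _)
        intro i _
        calc ‖1 - z * q ^ i‖ ≤ ‖(1:ℂ)‖ + ‖z * q ^ i‖ := by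
              simpa using norm_sub_le (1:ℂ) (z * q ^ i)
          _ = 1 + ‖z‖ * ‖q‖ ^ i := by simp [norm_mul, norm_pow]
          _ ≤ Real.exp (‖z‖ * ‖q‖ ^ i) := by
              have := Real.add_one_le_exp (‖z‖ * ‖q‖ ^ i)
              linarith
    _ = Real.exp (∑ r ∈ Finset.range n, ‖z‖ * ‖q‖ ^ r) := by
        rw [Real.exp_sum]
    _ ≤ Real.exp (‖z‖ / (1 - ‖q‖)) := by
        apply Real.exp_le_exp.2
        rw [← Finset.mul_sum]
        rw [div_eq_mul_inv]
        apply mul_le_mul_of_nonneg_left _ (norm_nonneg z)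
        calc ∑ r ∈ Finset.range n, ‖q‖ ^ r
            = (1 - ‖q‖ ^ n) / (1 - ‖q‖) := by
              rw [geom_sum_eq (by linarith)]
              rw [div_eq_div_iff (by linarith) (by linarith)]
              ring
          _ ≤ (1 - ‖q‖)⁻¹ := by
              rw [div_le_iff₀ (by linarith), inv_mul_cancel₀ (by linarith : (1:ℝ) - ‖q‖ ≠ 0)]
              have : (0:ℝ) ≤ ‖q‖ ^ n := pow_nonneg hq0 n
              linarith

lemma qPoch_norm_lb (q z : ℂ) (hq : ‖q‖ < 1) (hz : ∀ n, qPoch q z n ≠ 0) :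
    ∃ δ > 0, ∀ n, δ ≤ ‖qPoch q z n‖ := by
  have hq0 : (0:ℝ) ≤ ‖q‖ := norm_nonneg q
  have hden : (0:ℝ) < 1 - ‖q‖ := by linarith
  -- choose N with |z| * |q|^N / (1-|q|) ≤ 1/2
  obtain ⟨N, hN⟩ : ∃ N : ℕ, ‖z‖ * ‖q‖ ^ N ≤ (1 - ‖q‖) / 2 := by
    rcases eq_or_lt_of_le (norm_nonneg z) with hz0 | hz0
    · exact ⟨0, by rw [← hz0, zero_mul]; linarith⟩
    · have := tendsto_pow_atTop_nhds_zero_of_lt_one hq0 hq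
      have h2 := this.eventually_le_const (show (0:ℝ) < (1 - ‖q‖)/2 / ‖z‖ by positivity)
      obtain ⟨N, hN⟩ := h2.exists
      exact ⟨N, by rw [mul_comm, ← le_div_iff₀ hz0]; exact hN⟩
  -- tail bound: for N ≤ n, |∏_{r ∈ Ico N n} (1 - z q^r)| ≥ 1/2
  have tail : ∀ n, N ≤ n → (1:ℝ)/2 ≤ ‖∏ r ∈ Finset.Ico N n, (1 - z * q ^ r)‖ := by
    intro n hn
    rw [norm_prod]
    have hterm : ∀ r ∈ Finset.Ico N n, ‖z‖ * ‖q‖ ^ r ≤ (1 - ‖q‖)/2 := by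
      intro r hr
      have hNr : N ≤ r := (Finset.mem_Ico.1 hr).1
      calc ‖z‖ * ‖q‖ ^ r ≤ ‖z‖ * ‖q‖ ^ N := by
            apply mul_le_mul_of_nonneg_left _ (norm_nonneg z)
            exact pow_le_pow_of_le_one hq0 hq.le hNr
        _ ≤ (1 - ‖q‖)/2 := hN
    calc (1:ℝ)/2 ≤ 1 - ∑ r ∈ Finset.Ico N n, ‖z‖ * ‖q‖ ^ r := by
          have : ∑ r ∈ Finset.Ico N n, ‖z‖ * ‖q‖ ^ r ≤ 1/2 := by
            calc ∑ r ∈ Finset.Ico N n, ‖z‖ * ‖q‖ ^ r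
                ≤ ∑ r ∈ Finset.Ico N n, (‖z‖ * ‖q‖ ^ N) * ‖q‖ ^ (r - N) := by
                  apply Finset.sum_le_sum
                  intro r hr
                  have hNr : N ≤ r := (Finset.mem_Ico.1 hr).1
                  rw [mul_assoc, ← pow_add]
                  rw [Nat.add_sub_cancel' hNr]
              _ ≤ ∑ r ∈ Finset.Ico N n, ((1 - ‖q‖)/2) * ‖q‖ ^ (r - N) := by
                  apply Finset.sum_le_sum
                  intro r _
                  exact mul_le_mul_of_nonneg_right hN (pow_nonneg hq0 _)
              _ = ((1 - ‖q‖)/2) * ∑ r ∈ Finset.Ico N n, ‖q‖ ^ (r - N) := by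
                  rw [Finset.mul_sum]
              _ ≤ ((1 - ‖q‖)/2) * (1 - ‖q‖)⁻¹ := by
                  apply mul_le_mul_of_nonneg_left _ (by linarith)
                  rw [Finset.sum_Ico_eq_sum_range]
                  simp only [Nat.add_sub_cancel_left]
                  calc ∑ i ∈ Finset.range (n - N), ‖q‖ ^ i
                      = (1 - ‖q‖ ^ (n-N)) / (1 - ‖q‖) := by
                        rw [geom_sum_eq (by linarith)]
                        rw [div_eq_div_iff (by linarith) (by linarith)]; ring
                    _ ≤ (1 - ‖q‖)⁻¹ := by
                        rw [div_le_iff₀ hden, inv_mul_cancel₀ (ne_of_gt hden)]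
                        have : (0:ℝ) ≤ ‖q‖ ^ (n-N) := pow_nonneg hq0 _
                        linarith
              _ = 1/2 := by field_simp
          linarith [this]
      _ ≤ ∏ r ∈ Finset.Ico N n, (1 - ‖z‖ * ‖q‖ ^ r) := by
          apply one_sub_sum_le_prod
          · intro i hi; positivity
          · intro i hi
            have := hterm i hi
            linarith
      _ ≤ ∏ r ∈ Finset.Ico N n, ‖1 - z * q ^ r‖ := by
          apply Finset.prod_le_prod
          · intro i hi
            have := hterm i hi
            linarith
          · intro i hi
            calc 1 - ‖z‖ * ‖q‖ ^ i
                = ‖(1:ℂ)‖ - ‖z * q ^ i‖ := by simp [norm_mul, norm_pow]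
              _ ≤ ‖1 - z * q ^ i‖ := by
                  simpa using norm_sub_norm_le (1:ℂ) (z * q ^ i)
  -- positive min over n ≤ N
  set m : ℝ := (Finset.range (N+1)).inf' (by simp) (fun n => ‖qPoch q z n‖) with hm
  have hmpos : 0 < m := by
    rw [hm, Finset.lt_inf'_iff]
    intro i _
    exact norm_pos_iff.mpr (hz i)
  refine ⟨m/2, by positivity, fun n => ?_⟩
  rcases le_or_gt n N with h | h
  · have : m ≤ ‖qPoch q z n‖ :=
      Finset.inf'_le _ (Finset.mem_range.2 (Nat.lt_succ_of_le h))
    linarith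
  · have hsplit : qPoch q z n = qPoch q z N * ∏ r ∈ Finset.Ico N n, (1 - z * q ^ r) := by
      rw [qPoch, qPoch, ← Finset.prod_range_mul_prod_Ico _ h.le]
    rw [hsplit, norm_mul]
    have h1 : m ≤ ‖qPoch q z N‖ :=
      Finset.inf'_le _ (Finset.mem_range.2 (Nat.lt_succ_self N))
    have h2 := tail n h.le
    calc m/2 = m * (1/2) := by ring
      _ ≤ ‖qPoch q z N‖ * ‖∏ r ∈ Finset.Ico N n, (1 - z * q ^ r)‖ :=
          mul_le_mul h1 h2 (by norm_num) (norm_nonneg _)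

lemma qPoch_self_ne_zero (q : ℂ) (hq : ‖q‖ < 1) (n : ℕ) : qPoch q q n ≠ 0 := by
  rw [qPoch, Finset.prod_ne_zero_iff]
  intro r _
  intro h
  have h' : q * q ^ r = 1 := by linear_combination -h
  have : ‖q * q ^ r‖ = 1 := by rw [h']; simp
  rw [norm_mul, norm_pow] at this
  have h1 : ‖q‖ ^ r ≤ 1 := pow_le_one₀ (norm_nonneg q) hq.le
  have h2 : ‖q‖ * ‖q‖ ^ r ≤ ‖q‖ * 1 :=
    mul_le_mul_of_nonneg_left h1 (norm_nonneg q)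
  rw [mul_one] at h2
  linarith

lemma phi_summable (q q1 A B C x y : ℂ) (hq1 : ‖q‖ < 1) (hq11 : ‖q1‖ < 1)
    (hC : ∀ n, qPoch q C n ≠ 0) (hx : ‖x‖ < 1) (hy : ‖y‖ < 1) :
    Summable (fun p : ℕ × ℕ =>
      qPoch q A (p.1 + p.2) * qPoch q1 B p.1 /
        (qPoch q C (p.1 + p.2) * qPoch q1 q1 p.1 * qPoch q q p.2) * x ^ p.1 * y ^ p.2) := by
  obtain ⟨δ1, hδ1, hδ1'⟩ := qPoch_norm_lb q C hq1 hC
  obtain ⟨δ2, hδ2, hδ2'⟩ := qPoch_norm_lb q1 q1 hq11 (qPoch_self_ne_zero q1 hq11)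
  obtain ⟨δ3, hδ3, hδ3'⟩ := qPoch_norm_lb q q hq1 (qPoch_self_ne_zero q hq1)
  set MA := Real.exp (‖A‖ / (1 - ‖q‖)) with hMA
  set MB := Real.exp (‖B‖ / (1 - ‖q1‖)) with hMB
  have hMApos : 0 < MA := Real.exp_pos _
  have hMBpos : 0 < MB := Real.exp_pos _
  set K := MA * MB / (δ1 * δ2 * δ3) with hK
  have hKpos : 0 < K := by positivity
  have hgeo : Summable (fun p : ℕ × ℕ => ‖x‖ ^ p.1 * ‖y‖ ^ p.2) :=
    Summable.mul_of_nonneg (summable_geometric_of_lt_one (norm_nonneg x) hx)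
      (summable_geometric_of_lt_one (norm_nonneg y) hy)
      (fun i => pow_nonneg (norm_nonneg x) i)
      (fun i => pow_nonneg (norm_nonneg y) i)
  apply Summable.of_norm_bounded (g := fun p : ℕ × ℕ => K * (‖x‖ ^ p.1 * ‖y‖ ^ p.2))
    (hgeo.mul_left K)
  intro p
  obtain ⟨l, k⟩ := p
  simp only [norm_mul, norm_div, norm_pow]
  rw [mul_assoc]
  apply mul_le_mul_of_nonneg_right _ (by positivity)
  have hd1 : 0 < ‖qPoch q C (l + k)‖ := lt_of_lt_of_le hδ1 (hδ1' _)
  have hd2 : 0 < ‖qPoch q1 q1 l‖ := lt_of_lt_of_le hδ2 (hδ2' _)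
  have hd3 : 0 < ‖qPoch q q k‖ := lt_of_lt_of_le hδ3 (hδ3' _)
  rw [hK, div_le_div_iff₀ (by positivity) (by positivity)]
  calc ‖qPoch q A (l + k)‖ * ‖qPoch q1 B l‖ * (δ1 * δ2 * δ3)
      ≤ MA * MB * (‖qPoch q C (l + k)‖ * ‖qPoch q1 q1 l‖ *
          ‖qPoch q q k‖) := by
        apply mul_le_mul
        · exact mul_le_mul (qPoch_norm_le q A hq1 _) (qPoch_norm_le q1 B hq11 _)
            (norm_nonneg _) hMApos.le
        · apply mul_le_mul
          · exact mul_le_mul (hδ1' _) (hδ2' _) hδ2.le (norm_nonneg _)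
          · exact hδ3' _
          · exact hδ3.le
          · positivity
        · positivity
        · positivity

lemma core_alg (C A P Pa D Dc Qb Q1 Qk X Y w1 w2 : ℂ) (hD : D ≠ 0) (hDc : Dc ≠ 0) (hC0 : C ≠ 0)
    (hQ1 : Q1 ≠ 0) (hQk : Qk ≠ 0)
    (e1 : (1-A)*Pa = P*(1-A*(w1*w2))) (e2 : (1-C)*Dc = D*(1-C*(w1*w2))) :
    (1/C)*(1-A)*(Pa*Qb/(Dc*Q1*Qk)*X*Y) =
      (1-A/C)*(P*Qb/(Dc*Q1*Qk)*(w1*X)*(w2*Y)) + (1/C)*(1-C)*(P*Qb/(D*Q1*Qk)*X*Y) := by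
  field_simp
  linear_combination (Qb*X*Y*D)*e1 - (Qb*X*Y*P)*e2

theorem stmt8 (q q1 A B C x y : ℂ)
    (hq0 : 0 < ‖q‖) (hq1 : ‖q‖ < 1)
    (hq10 : 0 < ‖q1‖) (hq11 : ‖q1‖ < 1)
    (hC : ∀ n : ℕ, qPoch q C n ≠ 0)
    (hC0 : C ≠ 0) (hx : ‖x‖ < 1) (hy : ‖y‖ < 1) :
    (1 / C) * (1 - A) * Phi1 q q1 (q * A) B (q * C) x y =
      (1 - A / C) * Phi1 q q1 A B (q * C) (q * x) (q * y)
        + (1 / C) * (1 - C) * Phi1 q q1 A B C x y := by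
  have hqC : ∀ n, qPoch q (q*C) n ≠ 0 := by
    intro n h0
    have h := hC (n+1)
    rw [qPoch_shift, h0, zero_mul] at h
    exact h rfl
  have hqx : ‖q * x‖ < 1 := by
    rw [norm_mul]
    exact lt_of_le_of_lt (mul_le_of_le_one_left (norm_nonneg x) hq1.le) hx
  have hqy : ‖q * y‖ < 1 := by
    rw [norm_mul]
    exact lt_of_le_of_lt (mul_le_of_le_one_left (norm_nonneg y) hq1.le) hy
  have S2 := phi_summable q q1 A B (q*C) (q*x) (q*y) hq1 hq11 hqC hqx hqy
  have S3 := phi_summable q q1 A B C x y hq1 hq11 hC hx hy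
  rw [Phi1, Phi1, Phi1, ← tsum_mul_left, ← tsum_mul_left, ← tsum_mul_left,
    ← Summable.tsum_add (S2.mul_left _) (S3.mul_left _)]
  apply tsum_congr
  intro p
  obtain ⟨l, k⟩ := p
  simp only [mul_pow]
  have e1 : (1-A) * qPoch q (q*A) (l+k) = qPoch q A (l+k) * (1 - A*(q^l*q^k)) := by
    rw [mul_comm, ← qPoch_shift, qPoch_succ, ← pow_add]
  have e2 : (1-C) * qPoch q (q*C) (l+k) = qPoch q C (l+k) * (1 - C*(q^l*q^k)) := by
    rw [mul_comm, ← qPoch_shift, qPoch_succ, ← pow_add]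
  exact core_alg C A (qPoch q A (l+k)) (qPoch q (q*A) (l+k)) (qPoch q C (l+k))
    (qPoch q (q*C) (l+k)) (qPoch q1 B l) (qPoch q1 q1 l) (qPoch q q k) (x^l) (y^k)
    (q^l) (q^k) (hC _) (hqC _) hC0 (qPoch_self_ne_zero q1 hq11 l) (qPoch_self_ne_zero q hq1 k)
    e1 e2
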